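/- Let ℤ² denote the set of points of ℝ² with both coordinates integers. Then ⋃_{i ≥ 0} Tⁱ(ℤ²) equals the set ℚ² of all points of ℝ² with both coordinates rational. -/

import Mathlib

open Set Filter

noncomputable section

/-- The line through two points in the plane `ℝ × ℝ`. -/
def line (a b : ℝ × ℝ) : AffineSubspace ℝ (ℝ × ℝ) := affineSpan ℝ {a, b}

/-- The intersection operation `T`: the set of all intersection points of pairs of
distinct lines through pairs of distinct points of `S`. -/
def interT (S : Set (ℝ × ℝ)) : Set (ℝ × ℝ) :=
  {x | ∃ a ∈ S, ∃ b ∈ S, ∃ c ∈ S, ∃ d ∈ S,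
    a ≠ b ∧ c ≠ d ∧ line a b ≠ line c d ∧ x ∈ line a b ∧ x ∈ line c d}

/-- The set of points of `ℝ × ℝ` with both coordinates rational. -/
def ratPoints : Set (ℝ × ℝ) := {p | ∃ a b : ℚ, p = ((a : ℝ), (b : ℝ))}

/-- The set of points of `ℝ × ℝ` with both coordinates integral. -/
def intPoints : Set (ℝ × ℝ) := {p | ∃ m n : ℤ, p = ((m : ℝ), (n : ℝ))}



lemma mem_line_iff {a b x : ℝ × ℝ} : x ∈ line a b ↔ ∃ t : ℝ, x = t • (b - a) + a := by
  constructor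
  · intro h
    have h2 : (x - a) +ᵥ a ∈ affineSpan ℝ ({a, b} : Set (ℝ × ℝ)) := by
      simpa [line] using h
    rw [vadd_left_mem_affineSpan_pair] at h2
    obtain ⟨r, hr⟩ := h2
    refine ⟨r, ?_⟩
    have : r • (b - a) = x - a := hr
    rw [this]; abel
  · rintro ⟨t, rfl⟩
    simpa [line] using smul_vsub_vadd_mem_affineSpan_pair (k := ℝ) t a b

lemma line_direction (a b : ℝ × ℝ) : (line a b).direction = ℝ ∙ (a - b) := by
  rw [line, direction_affineSpan, vectorSpan_pair]
  rfl

lemma line_eq_of_parallel {a b c d x : ℝ × ℝ} (hab : a ≠ b) (hcd : c ≠ d)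
    (l : ℝ) (hl : c - d = l • (a - b)) (h1 : x ∈ line a b) (h2 : x ∈ line c d) :
    line a b = line c d := by
  have hcd' : c - d ≠ 0 := sub_ne_zero.mpr hcd
  have hl0 : l ≠ 0 := by
    rintro rfl
    simp at hl
    exact hcd' hl
  apply AffineSubspace.ext_of_direction_eq
  · rw [line_direction, line_direction, hl,
      Submodule.span_singleton_smul_eq (IsUnit.mk0 l hl0) _]
  · exact ⟨x, h1, h2⟩

lemma mem_line_of_mem {a b p q x : ℝ × ℝ} (hab : a ≠ b) (hpq : p ≠ q)
    (hp : p ∈ line a b) (hq : q ∈ line a b) (hx : x ∈ line a b) : x ∈ line p q := by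
  have hdir : p - q ∈ (line a b).direction := by
    have := AffineSubspace.vsub_mem_direction hp hq
    simpa using this
  rw [line_direction, Submodule.mem_span_singleton] at hdir
  obtain ⟨l, hl⟩ := hdir
  have heq : line a b = line p q :=
    line_eq_of_parallel hab hpq l hl.symm hp (left_mem_affineSpan_pair ℝ p q)
  rw [← heq]; exact hx

lemma interT_mono {S S' : Set (ℝ × ℝ)} (h : S ⊆ S') : interT S ⊆ interT S' := by
  rintro x ⟨a, ha, b, hb, c, hc, d, hd, rest⟩
  exact ⟨a, h ha, b, h hb, c, h hc, d, h hd, rest⟩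

lemma intPoints_subset_ratPoints : intPoints ⊆ ratPoints := by
  rintro p ⟨m, n, rfl⟩
  exact ⟨m, n, by push_cast; rfl⟩

lemma interT_ratPoints_subset : interT ratPoints ⊆ ratPoints := by
  rintro x ⟨a, ⟨A1, A2, rfl⟩, b, ⟨B1, B2, rfl⟩, c, ⟨C1, C2, rfl⟩, d, ⟨D1, D2, rfl⟩,
    hab, hcd, hLL, hx1, hx2⟩
  obtain ⟨s, hs⟩ := mem_line_iff.mp hx1
  obtain ⟨t, ht⟩ := mem_line_iff.mp hx2
  have hs1 : x.1 = s * ((B1 : ℝ) - A1) + A1 := by rw [hs]; simp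
  have hs2 : x.2 = s * ((B2 : ℝ) - A2) + A2 := by rw [hs]; simp
  have ht1 : x.1 = t * ((D1 : ℝ) - C1) + C1 := by rw [ht]; simp
  have ht2 : x.2 = t * ((D2 : ℝ) - C2) + C2 := by rw [ht]; simp
  set U1 : ℚ := B1 - A1 with hU1
  set U2 : ℚ := B2 - A2 with hU2
  set V1 : ℚ := D1 - C1 with hV1
  set V2 : ℚ := D2 - C2 with hV2
  set W1 : ℚ := C1 - A1 with hW1
  set W2 : ℚ := C2 - A2 with hW2
  by_cases hD : U1 * V2 - U2 * V1 = 0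
  · -- parallel lines: they must be equal, contradiction
    exfalso
    have hUne : ¬(U1 = 0 ∧ U2 = 0) := by
      rintro ⟨h1, h2⟩
      apply hab
      have e1 : B1 = A1 := by rw [hU1] at h1; linarith
      have e2 : B2 = A2 := by rw [hU2] at h2; linarith
      rw [e1, e2]
    obtain ⟨l, hl1, hl2⟩ : ∃ l : ℚ, V1 = l * U1 ∧ V2 = l * U2 := by
      by_cases hU1z : U1 = 0
      · have hU2z : U2 ≠ 0 := fun h => hUne ⟨hU1z, h⟩
        refine ⟨V2 / U2, ?_, by field_simp⟩
        have hv1 : V1 = 0 := by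
          have h' : U2 * V1 = 0 := by rw [hU1z] at hD; linarith
          rcases mul_eq_zero.mp h' with h | h
          · exact absurd h hU2z
          · exact h
        rw [hv1, hU1z]; ring
      · refine ⟨V1 / U1, by field_simp, ?_⟩
        field_simp
        nlinarith [hD]
    have hvec : ((C1 : ℝ), (C2 : ℝ)) - ((D1 : ℝ), (D2 : ℝ))
        = (l : ℝ) • (((A1 : ℝ), (A2 : ℝ)) - ((B1 : ℝ), (B2 : ℝ))) := by
      have c1 : ((V1 : ℚ) : ℝ) = ((l * U1 : ℚ) : ℝ) := by exact_mod_cast hl1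
      have c2 : ((V2 : ℚ) : ℝ) = ((l * U2 : ℚ) : ℝ) := by exact_mod_cast hl2
      rw [hV1, hU1] at c1
      rw [hV2, hU2] at c2
      push_cast at c1 c2
      rw [Prod.ext_iff]
      constructor
      · simp only [Prod.fst_sub, Prod.smul_fst, smul_eq_mul]
        linarith
      · simp only [Prod.snd_sub, Prod.smul_snd, smul_eq_mul]
        linarith
    exact hLL (line_eq_of_parallel hab hcd (l : ℝ) hvec hx1 hx2)
  · -- independent directions: solve for s rationally
    have hE1 : s * (U1 : ℝ) - t * (V1 : ℝ) = (W1 : ℝ) := by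
      push_cast [hU1, hV1, hW1]; linarith
    have hE2 : s * (U2 : ℝ) - t * (V2 : ℝ) = (W2 : ℝ) := by
      push_cast [hU2, hV2, hW2]; linarith
    have hDne : ((U1 * V2 - U2 * V1 : ℚ) : ℝ) ≠ 0 := by exact_mod_cast hD
    have hsval : s * ((U1 * V2 - U2 * V1 : ℚ) : ℝ) = ((W1 * V2 - W2 * V1 : ℚ) : ℝ) := by
      push_cast
      linear_combination (V2 : ℝ) * hE1 - (V1 : ℝ) * hE2
    have hsq : s = (((W1 * V2 - W2 * V1) / (U1 * V2 - U2 * V1) : ℚ) : ℝ) := by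
      rw [Rat.cast_div, eq_div_iff hDne]
      exact hsval
    refine ⟨A1 + (W1 * V2 - W2 * V1) / (U1 * V2 - U2 * V1) * U1,
            A2 + (W1 * V2 - W2 * V1) / (U1 * V2 - U2 * V1) * U2, ?_⟩
    rw [Prod.ext_iff]
    constructor
    · rw [hs1, hsq]
      rw [hU1, hU2, hV1, hV2, hW1, hW2]
      push_cast
      ring
    · rw [hs2, hsq]
      rw [hU1, hU2, hV1, hV2, hW1, hW2]
      push_cast
      ring

lemma exists_int_line (m n : ℤ) (p q : ℚ) :
    ∃ b ∈ intPoints, ((m : ℝ), (n : ℝ)) ≠ b ∧ ((p : ℝ), (q : ℝ)) ∈ line ((m : ℝ), (n : ℝ)) b := by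
  by_cases hx : ((p : ℝ), (q : ℝ)) = ((m : ℝ), (n : ℝ))
  · refine ⟨(((m + 1 : ℤ) : ℝ), ((n : ℤ) : ℝ)), ⟨m + 1, n, rfl⟩, ?_, ?_⟩
    · intro h
      rw [Prod.ext_iff] at h
      have := h.1
      push_cast at this
      linarith
    · rw [hx]
      exact left_mem_affineSpan_pair ℝ _ _
  · set N : ℤ := (p.den : ℤ) * (q.den : ℤ) with hN
    have hN0 : (N : ℚ) ≠ 0 := by
      rw [hN]; push_cast
      positivity
    have hNR : (N : ℝ) ≠ 0 := by
      exact_mod_cast fun h => hN0 (by exact_mod_cast h)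
    have hNZ : N ≠ 0 := fun h => hN0 (by rw [h]; simp)
    have hpnum : ((p.num : ℚ) : ℚ) = p * p.den := by
      exact (Rat.mul_den_eq_num p).symm
    have hqnum : ((q.num : ℚ) : ℚ) = q * q.den := by
      exact (Rat.mul_den_eq_num q).symm
    -- key cast identities in ℝ
    have key1 : ((p.num * q.den : ℤ) : ℝ) = (N : ℝ) * p := by
      have : ((p.num * q.den : ℤ) : ℚ) = (N : ℚ) * p := by
        push_cast [hN]
        push_cast at hpnum
        rw [hpnum]; ring
      exact_mod_cast this
    have key2 : ((q.num * p.den : ℤ) : ℝ) = (N : ℝ) * q := by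
      have : ((q.num * p.den : ℤ) : ℚ) = (N : ℚ) * q := by
        push_cast [hN]
        push_cast at hqnum
        rw [hqnum]; ring
      exact_mod_cast this
    refine ⟨(((m + p.num * q.den - N * m : ℤ) : ℝ), ((n + q.num * p.den - N * n : ℤ) : ℝ)),
      ⟨_, _, rfl⟩, ?_, ?_⟩
    · intro h
      rw [Prod.ext_iff] at h
      have h1 : (m : ℝ) = (m : ℝ) + ((N : ℝ) * p - N * m) := by
        have := h.1; push_cast at this ⊢
        push_cast at key1
        linarith
      have h2 : (n : ℝ) = (n : ℝ) + ((N : ℝ) * q - N * n) := by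
        have := h.2; push_cast at this ⊢
        push_cast at key2
        linarith
      have hp' : (p : ℝ) = m := by
        have : (N : ℝ) * p = N * m := by linarith
        exact mul_left_cancel₀ hNR this
      have hq' : (q : ℝ) = n := by
        have : (N : ℝ) * q = N * n := by linarith
        exact mul_left_cancel₀ hNR this
      exact hx (by rw [Prod.ext_iff]; exact ⟨hp', hq'⟩)
    · rw [mem_line_iff]
      refine ⟨(N : ℝ)⁻¹, ?_⟩
      rw [Prod.ext_iff]
      constructor
      · simp only [Prod.fst_sub, Prod.smul_fst, Prod.fst_add, smul_eq_mul]
        push_cast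
        push_cast at key1
        field_simp
        linarith
      · simp only [Prod.snd_sub, Prod.smul_snd, Prod.snd_add, smul_eq_mul]
        push_cast
        push_cast at key2
        field_simp
        linarith

lemma iter_subset (i : ℕ) : interT^[i] intPoints ⊆ ratPoints := by
  induction i with
  | zero => simpa using intPoints_subset_ratPoints
  | succ n ih =>
    rw [Function.iterate_succ_apply']
    exact fun x hx => interT_ratPoints_subset (interT_mono ih hx)

lemma ratPoints_subset_interT (p q : ℚ) : ((p : ℝ), (q : ℝ)) ∈ interT intPoints := by
  obtain ⟨y, hy⟩ : ∃ y : ℤ, (q : ℝ) ≠ ((y : ℤ) : ℝ) := by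
    by_cases hq : q = 0
    · exact ⟨1, by rw [hq]; norm_num⟩
    · exact ⟨0, by push_cast; exact_mod_cast hq⟩
  obtain ⟨b₁, hb₁mem, hne₁, hx₁⟩ := exists_int_line 0 y p q
  obtain ⟨b₂, hb₂mem, hne₂, hx₂⟩ := exists_int_line 1 y p q
  refine ⟨(((0 : ℤ) : ℝ), ((y : ℤ) : ℝ)), ⟨0, y, rfl⟩, b₁, hb₁mem,
    (((1 : ℤ) : ℝ), ((y : ℤ) : ℝ)), ⟨1, y, rfl⟩, b₂, hb₂mem, hne₁, hne₂, ?_, hx₁, hx₂⟩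
  intro h
  have ha12 : (((0 : ℤ) : ℝ), ((y : ℤ) : ℝ)) ≠ (((1 : ℤ) : ℝ), ((y : ℤ) : ℝ)) := by
    intro hc
    rw [Prod.ext_iff] at hc
    have := hc.1
    norm_num at this
  have ha2 : (((1 : ℤ) : ℝ), ((y : ℤ) : ℝ)) ∈ line (((0 : ℤ) : ℝ), ((y : ℤ) : ℝ)) b₁ := by
    rw [h]
    exact left_mem_affineSpan_pair ℝ _ _
  have hxline := mem_line_of_mem hne₁ ha12 (left_mem_affineSpan_pair ℝ _ _) ha2 hx₁
  rw [mem_line_iff] at hxline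
  obtain ⟨t, hxt⟩ := hxline
  have : (q : ℝ) = ((y : ℤ) : ℝ) := by
    have := congrArg Prod.snd hxt
    simpa using this
  exact hy this

/-- Iterating `T` on `ℤ²` generates all of `ℚ²`. -/
theorem iUnion_interT_intPoints_eq_ratPoints :
    (⋃ i, interT^[i] intPoints) = ratPoints := by
  ext x
  simp only [Set.mem_iUnion]
  constructor
  · rintro ⟨i, hi⟩
    exact iter_subset i hi
  · rintro ⟨p, q, rfl⟩
    exact ⟨1, by simpa [Function.iterate_one] using ratPoints_subset_interT p q⟩

end
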